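/- Every continuous bounded map f : 𝖱 → 𝖱 from the closed long ray to itself is eventually constant; that is, there exists z ∈ 𝖱 such that f(x) = f(z) for every x ≥ z. -/

import Mathlib

noncomputable section
open Set

/-- The first uncountable ordinal `ω₁`. -/
def Omega1 : Ordinal := Ordinal.omega 1

/-- The closed long ray `𝖱`: `ω₁ × [0,1)` with the lexicographic order. -/
def LongRay : Type 1 := {o : Ordinal // o < Omega1} ×ₗ (Set.Ico (0:ℝ) 1)

instance : LinearOrder LongRay :=
  inferInstanceAs (LinearOrder ({o : Ordinal // o < Omega1} ×ₗ (Set.Ico (0:ℝ) 1)))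

/-- `𝖱` carries the order topology. -/
instance : TopologicalSpace LongRay := Preorder.topology LongRay
instance : OrderTopology LongRay := ⟨rfl⟩

lemma omega1_pos : (0 : Ordinal) < Omega1 := Ordinal.omega_pos 1

/-- The point `0 = (0,0)` of the long ray. -/
def rayZero : LongRay := toLex (⟨0, omega1_pos⟩, ⟨0, by simp⟩)

/-- Identification of the countable ordinal `o` with the point `(o,0)` of the long ray
(junk value for `o ≥ ω₁`). -/
def ordR (o : Ordinal) : LongRay :=
  if h : o < Omega1 then toLex (⟨o, h⟩, ⟨0, by simp⟩) else rayZero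

/-- The `I`-diagonal at height `c` (only the values of `c` off `I` are relevant). -/
def Delta (n : ℕ) (I : Finset (Fin n)) (c : Fin n → LongRay) : Set (Fin n → LongRay) :=
  {x | (∀ i ∈ I, ∀ i' ∈ I, x i = x i') ∧ ∀ j ∉ I, x j = c j}

/-- `f` is `I`-cofinal if `f` restricted to `Δ_I = Δ_I(0)` is unbounded. -/
def ICofinal (n : ℕ) (f : (Fin n → LongRay) → LongRay) (I : Finset (Fin n)) : Prop :=
  ¬ BddAbove (f '' Delta n I (fun _ => rayZero))

/-- The cofinality class `𝔠(f) = {I : f is I-cofinal}`. -/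
def cofClass (n : ℕ) (f : (Fin n → LongRay) → LongRay) : Set (Finset (Fin n)) :=
  {I | ICofinal n f I}

/-- `M_I(c) = {x : x_i ≥ c for all i ∈ I}`. -/
def MSet (n : ℕ) (I : Finset (Fin n)) (c : LongRay) : Set (Fin n → LongRay) :=
  {x | ∀ i ∈ I, c ≤ x i}

/-- `E_I(b,d) = {x ∈ M_I(d) : x_j = b_j for all j ∉ I}`. -/
def ESet (n : ℕ) (I : Finset (Fin n)) (b : Fin n → LongRay) (d : LongRay) :
    Set (Fin n → LongRay) :=
  {x | (∀ i ∈ I, d ≤ x i) ∧ ∀ j ∉ I, x j = b j}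


set_option linter.dupNamespace false

namespace LR
open Ordinal Cardinal

instance : Nonempty LongRay := ⟨rayZero⟩

def fst (x : LongRay) : Ordinal := ((ofLex x).1 : Ordinal)
def snd (x : LongRay) : ℝ := ((ofLex x).2 : ℝ)

lemma fst_lt (x : LongRay) : fst x < Omega1 := (ofLex x).1.2
lemma snd_mem (x : LongRay) : snd x ∈ Set.Ico (0:ℝ) 1 := (ofLex x).2.2

lemma le_iff' (x y : LongRay) :
    x ≤ y ↔ fst x < fst y ∨ (fst x = fst y ∧ snd x ≤ snd y) := by
  constructor
  · intro h
    rcases (Prod.Lex.le_iff (x := x) (y := y)).1 h with h1 | ⟨h1, h2⟩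
    · exact Or.inl h1
    · exact Or.inr ⟨congrArg Subtype.val h1, h2⟩
  · intro h
    refine (Prod.Lex.le_iff (x := x) (y := y)).2 ?_
    rcases h with h1 | ⟨h1, h2⟩
    · exact Or.inl h1
    · exact Or.inr ⟨Subtype.ext h1, h2⟩

lemma lt_iff' (x y : LongRay) :
    x < y ↔ fst x < fst y ∨ (fst x = fst y ∧ snd x < snd y) := by
  constructor
  · intro h
    rcases (Prod.Lex.lt_iff (x := x) (y := y)).1 h with h1 | ⟨h1, h2⟩
    · exact Or.inl h1
    · exact Or.inr ⟨congrArg Subtype.val h1, h2⟩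
  · intro h
    refine (Prod.Lex.lt_iff (x := x) (y := y)).2 ?_
    rcases h with h1 | ⟨h1, h2⟩
    · exact Or.inl h1
    · exact Or.inr ⟨Subtype.ext h1, h2⟩

lemma ext' {x y : LongRay} (h1 : fst x = fst y) (h2 : snd x = snd y) : x = y := by
  have : ofLex x = ofLex y := Prod.ext (Subtype.ext h1) (Subtype.ext h2)
  exact congrArg toLex this

def mk' (o : Ordinal) (ho : o < Omega1) (t : ℝ) (h0 : 0 ≤ t) (h1 : t < 1) : LongRay :=
  toLex (⟨o, ho⟩, ⟨t, ⟨h0, h1⟩⟩)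

@[simp] lemma fst_mk' (o ho t h0 h1) : fst (mk' o ho t h0 h1) = o := rfl
@[simp] lemma snd_mk' (o ho t h0 h1) : snd (mk' o ho t h0 h1) = t := rfl
@[simp] lemma fst_rayZero : fst rayZero = 0 := rfl
@[simp] lemma snd_rayZero : snd rayZero = 0 := rfl

lemma rayZero_le (x : LongRay) : rayZero ≤ x := by
  rw [le_iff']
  rcases eq_or_lt_of_le (zero_le (a := fst x)) with h | h
  · exact Or.inr ⟨by simp [h.symm], by simpa using (snd_mem x).1⟩
  · exact Or.inl (by simpa using h)

lemma omega1_eq : Omega1 = (Cardinal.aleph 1).ord := (Cardinal.ord_aleph 1).symm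

lemma omega1_isLimit : Order.IsSuccLimit Omega1 := by
  rw [omega1_eq]; exact Cardinal.isSuccLimit_ord (Cardinal.aleph0_le_aleph 1)

lemma succ_lt_omega1 {o : Ordinal} (h : o < Omega1) : o + 1 < Omega1 := by
  rw [Ordinal.add_one_eq_succ]
  exact omega1_isLimit.succ_lt h

lemma exists_gt (b : LongRay) : ∃ z, b < z := by
  have h0 := (snd_mem b).1
  have h1 := (snd_mem b).2
  refine ⟨mk' (fst b) (fst_lt b) ((snd b + 1)/2) (by linarith) (by linarith), ?_⟩
  rw [lt_iff']
  exact Or.inr ⟨rfl, by simp; linarith⟩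

lemma not_bddAbove_univ : ¬ BddAbove (Set.univ : Set LongRay) := by
  rintro ⟨b, hb⟩
  obtain ⟨z, hz⟩ := exists_gt b
  exact absurd (hb (Set.mem_univ z)) (not_le.2 hz)

/-- Countable ranges are bounded above. -/
lemma bddAbove_range_seq (u : ℕ → LongRay) : BddAbove (Set.range u) := by
  set σ : Ordinal := iSup (fun n => fst (u n)) with hσ
  have hlt : σ < Omega1 := by
    rw [omega1_eq]
    exact omega1_eq ▸ Ordinal.iSup_lt_omega_one (fun n => fst_lt (u n))
  refine ⟨mk' (σ + 1) (succ_lt_omega1 hlt) 0 le_rfl one_pos, ?_⟩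
  rintro _ ⟨n, rfl⟩
  rw [le_iff']
  refine Or.inl ?_
  simp only [fst_mk']
  calc fst (u n) ≤ σ := Ordinal.le_iSup (fun n => fst (u n)) n
    _ < σ + 1 := lt_add_one σ

lemma bddAbove_iUnion (S : ℕ → Set LongRay) (h : ∀ n, BddAbove (S n)) :
    BddAbove (⋃ n, S n) := by
  choose b hb using h
  obtain ⟨c, hc⟩ := bddAbove_range_seq b
  refine ⟨c, ?_⟩
  rintro x hx
  obtain ⟨n, hn⟩ := Set.mem_iUnion.1 hx
  exact (hb n hn).trans (hc (Set.mem_range_self n))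

/-- Every nonempty bounded-above subset of the long ray has a least upper bound. -/
lemma exists_isLUB (S : Set LongRay) (hne : S.Nonempty) (hbdd : BddAbove S) :
    ∃ y, IsLUB S y := by
  obtain ⟨b, hb⟩ := hbdd
  set A : Set Ordinal := fst '' S with hA
  have hAne : A.Nonempty := hne.image _
  have hfst_le : ∀ x ∈ S, fst x ≤ fst b := by
    intro x hx
    rcases (le_iff' x b).1 (hb hx) with h | ⟨h, _⟩
    · exact h.le
    · exact h.le
  have hAbdd : BddAbove A := ⟨fst b, by rintro _ ⟨x, hx, rfl⟩; exact hfst_le x hx⟩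
  set σ := sSup A with hσdef
  have hσA : ∀ x ∈ S, fst x ≤ σ := fun x hx => le_csSup hAbdd ⟨x, hx, rfl⟩
  have hσle : σ ≤ fst b := csSup_le hAne (by rintro _ ⟨x, hx, rfl⟩; exact hfst_le x hx)
  have hσlt : σ < Omega1 := lt_of_le_of_lt hσle (fst_lt b)
  have hσ_least : ∀ u : LongRay, u ∈ upperBounds S → σ ≤ fst u := by
    intro u hu
    refine csSup_le hAne ?_
    rintro _ ⟨x, hx, rfl⟩
    rcases (le_iff' x u).1 (hu hx) with h | ⟨h, _⟩
    · exact h.le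
    · exact h.le
  set T : Set ℝ := {t | ∃ x ∈ S, fst x = σ ∧ snd x = t} with hT
  by_cases hTne : T.Nonempty
  · have hT01 : ∀ t ∈ T, 0 ≤ t ∧ t < 1 := by
      rintro t ⟨x, hx, _, rfl⟩; exact ⟨(snd_mem x).1, (snd_mem x).2⟩
    have hTbdd : BddAbove T := ⟨1, fun t ht => (hT01 t ht).2.le⟩
    set τ := sSup T with hτdef
    have hτ0 : 0 ≤ τ := by
      obtain ⟨t0, ht0⟩ := hTne
      exact (hT01 t0 ht0).1.trans (le_csSup hTbdd ht0)
    have hτ1 : τ ≤ 1 := csSup_le hTne (fun t ht => (hT01 t ht).2.le)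
    have hτ_le_snd : ∀ u : LongRay, u ∈ upperBounds S → fst u = σ → τ ≤ snd u := by
      intro u hu hfu
      refine csSup_le hTne ?_
      rintro _ ⟨x, hx, hx1, rfl⟩
      rcases (le_iff' x u).1 (hu hx) with h | ⟨_, h⟩
      · rw [hx1, hfu] at h; exact absurd h (lt_irrefl σ)
      · exact h
    by_cases hτlt : τ < 1
    · refine ⟨mk' σ hσlt τ hτ0 hτlt, ?_, ?_⟩
      · intro x hx
        rw [le_iff']
        simp only [fst_mk', snd_mk']
        rcases (hσA x hx).lt_or_eq with h | h
        · exact Or.inl h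
        · exact Or.inr ⟨h, le_csSup hTbdd ⟨x, hx, h, rfl⟩⟩
      · intro u hu
        rw [le_iff']
        simp only [fst_mk', snd_mk']
        rcases (hσ_least u hu).lt_or_eq with h | h
        · exact Or.inl h
        · exact Or.inr ⟨h, hτ_le_snd u hu h.symm⟩
    · -- τ = 1
      have hτeq : τ = 1 := le_antisymm hτ1 (not_lt.1 hτlt)
      have hσb : σ < fst b := by
        rcases hσle.lt_or_eq with h | h
        · exact h
        · exfalso
          have : τ ≤ snd b := hτ_le_snd b hb h.symm
          exact absurd (this.trans_lt (snd_mem b).2) (by rw [hτeq]; exact lt_irrefl 1)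
      have hσ1 : σ + 1 < Omega1 := succ_lt_omega1 hσlt
      refine ⟨mk' (σ + 1) hσ1 0 le_rfl one_pos, ?_, ?_⟩
      · intro x hx
        rw [le_iff']
        exact Or.inl (by simpa using (hσA x hx).trans_lt (lt_add_one σ))
      · intro u hu
        have h1 : σ ≤ fst u := hσ_least u hu
        have h2 : σ ≠ fst u := by
          intro h
          have : τ ≤ snd u := hτ_le_snd u hu h.symm
          exact absurd (this.trans_lt (snd_mem u).2) (by rw [hτeq]; exact lt_irrefl 1)
        have h3 : σ + 1 ≤ fst u := by
          rw [Ordinal.add_one_eq_succ]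
          exact Order.succ_le_of_lt (h1.lt_of_ne h2)
        rw [le_iff']
        simp only [fst_mk', snd_mk']
        rcases h3.lt_or_eq with h | h
        · exact Or.inl h
        · exact Or.inr ⟨h, (snd_mem u).1⟩
  · -- T empty: σ not attained
    refine ⟨mk' σ hσlt 0 le_rfl one_pos, ?_, ?_⟩
    · intro x hx
      rw [le_iff']
      simp only [fst_mk']
      refine Or.inl ((hσA x hx).lt_of_ne ?_)
      intro h
      exact hTne ⟨snd x, x, hx, h, rfl⟩
    · intro u hu
      rw [le_iff']
      simp only [fst_mk', snd_mk']
      rcases (hσ_least u hu).lt_or_eq with h | h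
      · exact Or.inl h
      · exact Or.inr ⟨h, (snd_mem u).1⟩

end LR

namespace LR

/-- Two closed unbounded subsets of the long ray intersect. -/
lemma closed_unbounded_inter (F G : Set LongRay) (hF : IsClosed F) (hG : IsClosed G)
    (hFu : ¬ BddAbove F) (hGu : ¬ BddAbove G) : (F ∩ G).Nonempty := by
  have step : ∀ (S : Set LongRay), ¬ BddAbove S → ∀ b : LongRay, ∃ x, x ∈ S ∧ b < x := by
    intro S hS b
    by_contra h
    push_neg at h
    exact hS ⟨b, fun x hx => h x hx⟩
  choose gF hgFmem hgFlt using step F hFu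
  choose gG hgGmem hgGlt using step G hGu
  let p : ℕ → LongRay × LongRay := fun n =>
    Nat.rec (⟨gF rayZero, gG (gF rayZero)⟩) (fun _ q => ⟨gF q.2, gG (gF q.2)⟩) n
  set a : ℕ → LongRay := fun n => (p n).1 with ha
  set bb : ℕ → LongRay := fun n => (p n).2 with hbb
  have hsnd : ∀ n, bb n = gG (a n) := by
    intro n; cases n <;> rfl
  have hfst : ∀ n, a (n + 1) = gF (bb n) := fun n => rfl
  have haF : ∀ n, a n ∈ F := by
    intro n; cases n with
    | zero => exact hgFmem rayZero
    | succ m => exact hgFmem (bb m)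
  have hbG : ∀ n, bb n ∈ G := by
    intro n; rw [hsnd]; exact hgGmem (a n)
  have hab : ∀ n, a n < bb n := by
    intro n; rw [hsnd]; exact hgGlt (a n)
  have hba : ∀ n, bb n < a (n + 1) := by
    intro n; rw [hfst]; exact hgFlt (bb n)
  have hamono : Monotone a :=
    (strictMono_nat_of_lt_succ (fun n => (hab n).trans (hba n))).monotone
  have hbmono : Monotone bb :=
    (strictMono_nat_of_lt_succ (fun n => (hba n).trans_le (hab (n+1)).le)).monotone
  obtain ⟨x, hx⟩ := exists_isLUB (Set.range a) ⟨a 0, Set.mem_range_self 0⟩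
    (bddAbove_range_seq a)
  have hub_eq : upperBounds (Set.range a) = upperBounds (Set.range bb) := by
    ext u
    constructor
    · rintro hu _ ⟨n, rfl⟩
      exact (hba n).le.trans (hu (Set.mem_range_self (n+1)))
    · rintro hu _ ⟨n, rfl⟩
      exact (hab n).le.trans (hu (Set.mem_range_self n))
  have hxb : IsLUB (Set.range bb) x := by
    constructor
    · rw [← hub_eq]; exact hx.1
    · rw [← hub_eq]; exact hx.2
  have hta : Filter.Tendsto a Filter.atTop (nhds x) := tendsto_atTop_isLUB hamono hx
  have htb : Filter.Tendsto bb Filter.atTop (nhds x) := tendsto_atTop_isLUB hbmono hxb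
  refine ⟨x, ?_, ?_⟩
  · exact hF.mem_of_tendsto hta (Filter.Eventually.of_forall haF)
  · exact hG.mem_of_tendsto htb (Filter.Eventually.of_forall hbG)

lemma countable_Iic_ordinal {o : Ordinal} (ho : o < Omega1) : (Set.Iic o).Countable := by
  have h1 : o + 1 < Omega1 := succ_lt_omega1 ho
  have h2 : (Set.Iio (o + 1)).Countable := by
    rw [Cardinal.countable_iff_lt_aleph_one, Ordinal.mk_Iio_ordinal,
      Cardinal.lift_lt_aleph_one, ← Cardinal.lt_ord, ← omega1_eq]
    exact h1
  have : Set.Iic o = Set.Iio (o + 1) := by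
    rw [Ordinal.add_one_eq_succ, Order.Iio_succ]
  rwa [this]

/-- A countable sequence cofinal from below at `y`. -/
lemma exists_seq_cofinal_below (y : LongRay) (hy : rayZero < y) :
    ∃ g : ℕ → LongRay, (∀ n, g n < y) ∧ ∀ w, w < y → ∃ n, w ≤ g n := by
  set D : Set LongRay := {x | x < y ∧ ∃ q : ℚ, snd x = (q : ℝ)} with hD
  have hD0 : rayZero ∈ D := ⟨hy, 0, by simp⟩
  have hDc : D.Countable := by
    set ψ : LongRay → Ordinal × ℝ := fun x => (fst x, snd x) with hψ
    have hinj : Function.Injective ψ := by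
      intro x y h
      exact ext' (congrArg Prod.fst h) (congrArg Prod.snd h)
    have hsub : D ⊆ ψ ⁻¹' (Set.Iic (fst y) ×ˢ Set.range ((↑) : ℚ → ℝ)) := by
      rintro x ⟨hxy, q, hq⟩
      refine ⟨?_, ⟨q, hq.symm⟩⟩
      rcases (lt_iff' x y).1 hxy with h | ⟨h, _⟩
      · exact h.le
      · exact h.le
    exact Set.Countable.mono hsub
      (((countable_Iic_ordinal (fst_lt y)).prod (Set.countable_range _)).preimage hinj)
  obtain ⟨g, hg⟩ := hDc.exists_eq_range ⟨_, hD0⟩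
  refine ⟨g, ?_, ?_⟩
  · intro n
    have : g n ∈ D := by rw [hg]; exact Set.mem_range_self n
    exact this.1
  · intro w hw
    have h0 := (snd_mem w).1
    have h1 := (snd_mem w).2
    rcases (lt_iff' w y).1 hw with h | ⟨h, h2⟩
    · obtain ⟨q, hq1, hq2⟩ := exists_rat_btwn h1
      have hd : mk' (fst w) (fst_lt w) q (h0.trans hq1.le) hq2 ∈ D := by
        refine ⟨?_, q, rfl⟩
        rw [lt_iff']; exact Or.inl (by simpa using h)
      rw [hg] at hd
      obtain ⟨n, hn⟩ := hd
      refine ⟨n, ?_⟩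
      rw [hn, le_iff']
      exact Or.inr ⟨rfl, by simp [hq1.le]⟩
    · obtain ⟨q, hq1, hq2⟩ := exists_rat_btwn h2
      have hq3 : (q : ℝ) < 1 := hq2.trans (snd_mem y).2
      have hd : mk' (fst w) (fst_lt w) q (h0.trans hq1.le) hq3 ∈ D := by
        refine ⟨?_, q, rfl⟩
        rw [lt_iff']; exact Or.inr ⟨by simpa using h, by simpa using hq2⟩
      rw [hg] at hd
      obtain ⟨n, hn⟩ := hd
      refine ⟨n, ?_⟩
      rw [hn, le_iff']
      exact Or.inr ⟨rfl, by simp [hq1.le]⟩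

/-- A countable sequence approaching `y` strictly from above. -/
lemma exists_seq_approach_above (y : LongRay) :
    ∃ v : ℕ → LongRay, (∀ n, y < v n) ∧ ∀ w, y < w → ∃ n, v n ≤ w := by
  have h0 := (snd_mem y).1
  have h1 := (snd_mem y).2
  have hpos : (0:ℝ) < 1 - snd y := by linarith
  have hlt1 : ∀ n : ℕ, snd y + (1 - snd y)/(n+2) < 1 := by
    intro n
    have h2 : (1 - snd y)/(n+2) < 1 - snd y := by
      apply div_lt_self hpos
      have : (0:ℝ) ≤ n := Nat.cast_nonneg n
      linarith
    linarith
  have hge0 : ∀ n : ℕ, (0:ℝ) ≤ snd y + (1 - snd y)/(n+2) := by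
    intro n
    have hn2 : (0:ℝ) < n + 2 := by positivity
    have := div_nonneg hpos.le hn2.le
    linarith
  refine ⟨fun n => mk' (fst y) (fst_lt y) (snd y + (1 - snd y)/(n+2)) (hge0 n) (hlt1 n), ?_, ?_⟩
  · intro n
    rw [lt_iff']
    refine Or.inr ⟨rfl, ?_⟩
    simp only [snd_mk']
    have hn2 : (0:ℝ) < (n:ℝ) + 2 := by positivity
    have := div_pos hpos hn2
    linarith
  · intro w hw
    rcases (lt_iff' y w).1 hw with h | ⟨h, h2⟩
    · exact ⟨0, by rw [le_iff']; exact Or.inl (by simpa using h)⟩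
    · obtain ⟨n, hn⟩ := exists_nat_ge ((1 - snd y)/(snd w - snd y))
      have hd : (0:ℝ) < snd w - snd y := by linarith
      have hn2 : (0:ℝ) < (n:ℝ) + 2 := by positivity
      have hkey : (1 - snd y)/((n:ℝ)+2) ≤ snd w - snd y := by
        rw [div_le_iff₀ hn2]
        have h3 : (1 - snd y)/(snd w - snd y) ≤ (n:ℝ) + 2 := by linarith
        calc 1 - snd y = ((1 - snd y)/(snd w - snd y)) * (snd w - snd y) := by
              field_simp
          _ ≤ ((n:ℝ) + 2) * (snd w - snd y) := by
              apply mul_le_mul_of_nonneg_right h3 hd.le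
          _ = (snd w - snd y) * ((n:ℝ) + 2) := by ring
      refine ⟨n, ?_⟩
      rw [le_iff']
      refine Or.inr ⟨by simpa using h, ?_⟩
      simp only [snd_mk']
      linarith

end LR

/-- every continuous bounded map `f : 𝖱 → 𝖱` is eventually constant. -/
theorem eventually_constant_of_bounded (f : LongRay → LongRay)
    (hf : Continuous f) (hbd : BddAbove (Set.range f)) :
    ∃ z : LongRay, ∀ x : LongRay, z ≤ x → f x = f z := by
  classical
  set P : Set LongRay := {c | ¬ BddAbove {x | c ≤ f x}} with hPdef
  have hPne : P.Nonempty := by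
    refine ⟨rayZero, ?_⟩
    have heq : {x | rayZero ≤ f x} = Set.univ :=
      Set.eq_univ_of_forall (fun x => LR.rayZero_le (f x))
    simp only [hPdef, Set.mem_setOf_eq, heq]
    exact LR.not_bddAbove_univ
  have hPbdd : BddAbove P := by
    obtain ⟨B, hB⟩ := hbd
    refine ⟨B, fun c hc => ?_⟩
    have hne : {x | c ≤ f x}.Nonempty := by
      by_contra h
      rw [Set.not_nonempty_iff_eq_empty] at h
      exact hc (h ▸ bddAbove_empty)
    obtain ⟨x, hx⟩ := hne
    exact le_trans hx (hB (Set.mem_range_self x))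
  obtain ⟨c, hc⟩ := LR.exists_isLUB P hPne hPbdd
  have hupper : BddAbove {x | c < f x} := by
    obtain ⟨v, hv1, hv2⟩ := LR.exists_seq_approach_above c
    have hsub : {x | c < f x} ⊆ ⋃ n, {x | v n ≤ f x} := by
      intro x hx
      obtain ⟨n, hn⟩ := hv2 _ hx
      exact Set.mem_iUnion.2 ⟨n, hn⟩
    refine BddAbove.mono hsub (LR.bddAbove_iUnion _ fun n => ?_)
    by_contra h
    have : v n ∈ P := h
    exact absurd (hc.1 this) (not_le.2 (hv1 n))
  have hlower : BddAbove {x | f x < c} := by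
    by_cases h0 : rayZero < c
    · obtain ⟨g, hg1, hg2⟩ := LR.exists_seq_cofinal_below c h0
      have hsub : {x | f x < c} ⊆ ⋃ n, {x | f x ≤ g n} := by
        intro x hx
        obtain ⟨n, hn⟩ := hg2 _ hx
        exact Set.mem_iUnion.2 ⟨n, hn⟩
      refine BddAbove.mono hsub (LR.bddAbove_iUnion _ fun n => ?_)
      obtain ⟨e, heP, hge⟩ : ∃ e ∈ P, g n < e := by
        by_contra h
        push_neg at h
        have hub : g n ∈ upperBounds P := fun e heP => h e heP
        exact absurd (hc.2 hub) (not_le.2 (hg1 n))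
      by_contra hB
      have hclosed1 : IsClosed {x | f x ≤ g n} := isClosed_Iic.preimage hf
      have hclosed2 : IsClosed {x | e ≤ f x} := isClosed_Ici.preimage hf
      obtain ⟨x, hx1, hx2⟩ := LR.closed_unbounded_inter _ _ hclosed1 hclosed2 hB heP
      exact absurd (le_trans hx2 hx1) (not_le.2 hge)
    · have heq : {x | f x < c} = ∅ := by
        refine Set.eq_empty_of_forall_notMem fun x hx => ?_
        have h1 : c ≤ rayZero := not_lt.1 h0
        exact absurd ((h1.trans (LR.rayZero_le (f x))).trans_lt hx) (lt_irrefl c)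
      rw [heq]
      exact bddAbove_empty
  have hBdd : BddAbove {x | f x ≠ c} := by
    have hsub : {x | f x ≠ c} ⊆ {x | f x < c} ∪ {x | c < f x} := by
      intro x hx
      rcases lt_or_gt_of_ne hx with h | h
      · exact Or.inl h
      · exact Or.inr h
    exact BddAbove.mono hsub (hlower.union hupper)
  obtain ⟨b, hb⟩ := hBdd
  obtain ⟨z, hz⟩ := LR.exists_gt b
  have hval : ∀ x, z ≤ x → f x = c := by
    intro x hxz
    by_contra h
    exact absurd (hz.trans_le hxz) (not_lt.2 (hb h))
  exact ⟨z, fun x hx => (hval x hx).trans (hval z le_rfl).symm⟩
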